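/- Let D be an (n,α,p)-pseudorandom digraph with p = ω((log n)^8/n), and let S_1, S_2 be disjoint vertex sets of equal size s with s·p = ω((log n)^{2.1}) such that every vertex v satisfies d^+(v,S_2) ≥ (1/2 + α/4)p·s and d^−(v,S_1) ≥ (1/2 + α/4)p·s. Then there exists a perfect matching from S_1 to S_2 using arcs of D directed from S_1 to S_2. -/

import Mathlib

set_option maxHeartbeats 400000

open Filter

def outDeg {n : ℕ} (D : Fin n → Fin n → Bool) (v : Fin n) (S : Finset (Fin n)) : ℕ :=
  (S.filter fun w => D v w = true).card

def inDeg {n : ℕ} (D : Fin n → Fin n → Bool) (v : Fin n) (S : Finset (Fin n)) : ℕ :=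
  (S.filter fun w => D w v = true).card

def arcsIn {n : ℕ} (D : Fin n → Fin n → Bool) (X : Finset (Fin n)) : ℕ :=
  ((X ×ˢ X).filter fun e => D e.1 e.2 = true).card

def arcsBetween {n : ℕ} (D : Fin n → Fin n → Bool) (X Y : Finset (Fin n)) : ℕ :=
  ((X ×ˢ Y).filter fun e => D e.1 e.2 = true).card

lemma arcsBetween_eq_sum_out {n : ℕ} (D : Fin n → Fin n → Bool) (X Y : Finset (Fin n)) :
    arcsBetween D X Y = ∑ x ∈ X, outDeg D x Y := by
  classical
  unfold arcsBetween outDeg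
  rw [Finset.card_eq_sum_card_fiberwise (f := Prod.fst) (t := X)
    (fun e he => (Finset.mem_product.1 (Finset.mem_filter.1 he).1).1)]
  refine Finset.sum_congr rfl fun x hx => ?_
  have : ((X ×ˢ Y).filter fun e => D e.1 e.2 = true).filter (fun e => e.1 = x)
      = {x} ×ˢ (Y.filter fun w => D x w = true) := by
    ext ⟨a, b⟩
    simp only [Finset.mem_filter, Finset.mem_product, Finset.mem_singleton]
    constructor
    · rintro ⟨⟨⟨h1, h2⟩, h3⟩, rfl⟩; exact ⟨rfl, h2, h3⟩
    · rintro ⟨rfl, h2, h3⟩; exact ⟨⟨⟨hx, h2⟩, h3⟩, rfl⟩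
  rw [this, Finset.card_product, Finset.card_singleton, one_mul]

lemma arcsBetween_eq_sum_in {n : ℕ} (D : Fin n → Fin n → Bool) (X Y : Finset (Fin n)) :
    arcsBetween D X Y = ∑ y ∈ Y, inDeg D y X := by
  classical
  unfold arcsBetween inDeg
  rw [Finset.card_eq_sum_card_fiberwise (f := Prod.snd) (t := Y)
    (fun e he => (Finset.mem_product.1 (Finset.mem_filter.1 he).1).2)]
  refine Finset.sum_congr rfl fun y hy => ?_
  have : ((X ×ˢ Y).filter fun e => D e.1 e.2 = true).filter (fun e => e.2 = y)
      = (X.filter fun w => D w y = true) ×ˢ {y} := by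
    ext ⟨a, b⟩
    simp only [Finset.mem_filter, Finset.mem_product, Finset.mem_singleton]
    constructor
    · rintro ⟨⟨⟨h1, h2⟩, h3⟩, rfl⟩; exact ⟨⟨h1, h3⟩, rfl⟩
    · rintro ⟨⟨h1, h3⟩, rfl⟩; exact ⟨⟨⟨h1, hy⟩, h3⟩, rfl⟩
  rw [this, Finset.card_product, Finset.card_singleton, mul_one]

lemma arcsBetween_le_arcsIn {n : ℕ} (D : Fin n → Fin n → Bool) (X Y : Finset (Fin n)) :
    arcsBetween D X Y ≤ arcsIn D (X ∪ Y) :=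
  Finset.card_le_card (Finset.filter_subset_filter _
    (Finset.product_subset_product Finset.subset_union_left Finset.subset_union_right))

lemma log_nat_nonneg (n : ℕ) : 0 ≤ Real.log n := Real.log_natCast_nonneg n

lemma p2_contra {n : ℕ} {p t : ℝ} {D : Fin n → Fin n → Bool}
    (hP2 : ∀ X : Finset (Fin n), (X.card : ℝ) ≤ (Real.log n)^2 / p →
      (arcsIn D X : ℝ) ≤ (X.card : ℝ) * (Real.log n) ^ (2.1 : ℝ))
    (ht : 2 * (Real.log n) ^ (2.1 : ℝ) < t)
    {X Y : Finset (Fin n)} {k : ℕ} (hk : 0 < k)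
    (harc : (k : ℝ) * t ≤ (arcsBetween D X Y : ℝ))
    (hsize : (X ∪ Y).card ≤ 2 * k)
    (hbound : (((X ∪ Y).card : ℕ) : ℝ) ≤ (Real.log n)^2 / p) : False := by
  have h2 := hP2 (X ∪ Y) hbound
  have hL : (0:ℝ) ≤ (Real.log n) ^ (2.1 : ℝ) := Real.rpow_nonneg (log_nat_nonneg n) _
  have hmono : (arcsBetween D X Y : ℝ) ≤ (arcsIn D (X ∪ Y) : ℝ) := by
    exact_mod_cast arcsBetween_le_arcsIn D X Y
  have hcard : (((X ∪ Y).card : ℕ) : ℝ) ≤ 2 * k := by exact_mod_cast hsize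
  have hkpos : (0:ℝ) < k := by exact_mod_cast hk
  nlinarith [mul_le_mul_of_nonneg_right hcard hL]

lemma key {n : ℕ} {α p : ℝ} (hα : 0 < α) (hp : 0 < p) (hp1 : p < 1)
    {D : Fin n → Fin n → Bool}
    (hP2 : ∀ X : Finset (Fin n), (X.card : ℝ) ≤ (Real.log n)^2 / p →
      (arcsIn D X : ℝ) ≤ (X.card : ℝ) * (Real.log n) ^ (2.1 : ℝ))
    (hP3 : ∀ X Y : Finset (Fin n), Disjoint X Y →
      (Real.log n) ^ (1.1 : ℝ) / p ≤ (X.card : ℝ) →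
      (Real.log n) ^ (1.1 : ℝ) / p ≤ (Y.card : ℝ) →
      (arcsBetween D X Y : ℝ) ≤ (1 + α/2) * X.card * Y.card * p)
    {s : ℕ} {S₁ S₂ : Finset (Fin n)} (hdisj : Disjoint S₁ S₂)
    (hc1 : S₁.card = s) (hc2 : S₂.card = s)
    (hdeg : ∀ v : Fin n, (1/2 + α/4) * p * s ≤ (outDeg D v S₂ : ℝ) ∧
      (1/2 + α/4) * p * s ≤ (inDeg D v S₁ : ℝ))
    (hE1 : 2 * (Real.log n) ^ (2.1 : ℝ) < (1/2 + α/4) * p * s)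
    (hE2 : (Real.log n) ^ (1.1 : ℝ) + 1 ≤ (Real.log n)^2 / 2)
    (A : Finset (Fin n)) (hA : A ⊆ S₁)
    (hviol : (S₂.filter fun w => ∃ a ∈ A, D a w = true).card < A.card) : False := by
  classical
  set L := Real.log n with hLdef
  set t : ℝ := (1/2 + α/4) * p * s with htdef
  have hL0 : 0 ≤ L := log_nat_nonneg n
  have hL21 : (0:ℝ) ≤ L ^ (2.1 : ℝ) := Real.rpow_nonneg hL0 _
  have hLpos : 0 < L := by
    rcases lt_or_eq_of_le hL0 with h | h; · exact h
    exfalso; rw [← h] at hE2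
    rw [Real.zero_rpow (by norm_num)] at hE2; norm_num at hE2
  have hL11pos : (0:ℝ) < L ^ (1.1 : ℝ) := Real.rpow_pos_of_pos hLpos _
  have htpos : 0 < t := lt_of_le_of_lt (by positivity) hE1
  set NA : Finset (Fin n) := S₂.filter (fun w => ∃ a ∈ A, D a w = true) with hNAdef
  set B : Finset (Fin n) := S₂ \ NA with hBdef
  have hNA2 : NA ⊆ S₂ := Finset.filter_subset _ _
  have hB2 : B ⊆ S₂ := Finset.sdiff_subset
  have hApos : 0 < A.card := lt_of_le_of_lt (Nat.zero_le _) hviol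
  have hAs : A.card ≤ s := hc1 ▸ Finset.card_le_card hA
  have hNAs : NA.card ≤ s := hc2 ▸ Finset.card_le_card hNA2
  have hBcard : B.card = s - NA.card := by rw [hBdef, Finset.card_sdiff_of_subset hNA2, hc2]
  have hSAcard : (S₁ \ A).card = s - A.card := by rw [Finset.card_sdiff_of_subset hA, hc1]
  have hBpos : 0 < B.card := by
    rw [hBcard]; exact Nat.sub_pos_of_lt (lt_of_lt_of_le hviol hAs)
  -- real card identities
  have hBr : (B.card : ℝ) = (s : ℝ) - NA.card := by rw [hBcard, Nat.cast_sub hNAs]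
  have hSAr : ((S₁ \ A).card : ℝ) = (s : ℝ) - A.card := by rw [hSAcard, Nat.cast_sub hAs]
  -- out-degrees into NA
  have f2 : ∀ a ∈ A, t ≤ (outDeg D a NA : ℝ) := by
    intro a ha
    refine le_trans (hdeg a).1 ?_
    have : (S₂.filter fun w => D a w = true) ⊆ (NA.filter fun w => D a w = true) := by
      intro w hw
      rw [Finset.mem_filter] at hw ⊢
      exact ⟨Finset.mem_filter.2 ⟨hw.1, ⟨a, ha, hw.2⟩⟩, hw.2⟩
    exact_mod_cast Finset.card_le_card this
  have harcA : ∀ A' ⊆ A, (A'.card : ℝ) * t ≤ (arcsBetween D A' NA : ℝ) := by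
    intro A' hA'
    rw [arcsBetween_eq_sum_out]
    push_cast
    calc (A'.card : ℝ) * t = ∑ _a ∈ A', t := by rw [Finset.sum_const, nsmul_eq_mul]
    _ ≤ ∑ a ∈ A', (outDeg D a NA : ℝ) := Finset.sum_le_sum (fun a ha => f2 a (hA' ha))
  -- in-degrees from S₁ \ A
  have f3 : ∀ b ∈ B, t ≤ (inDeg D b (S₁ \ A) : ℝ) := by
    intro b hb
    refine le_trans (hdeg b).2 ?_
    have : (S₁.filter fun w => D w b = true) ⊆ ((S₁ \ A).filter fun w => D w b = true) := by
      intro w hw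
      rw [Finset.mem_filter] at hw ⊢
      refine ⟨Finset.mem_sdiff.2 ⟨hw.1, fun hwA => ?_⟩, hw.2⟩
      have : b ∈ NA := Finset.mem_filter.2 ⟨hB2 hb, ⟨w, hwA, hw.2⟩⟩
      exact (Finset.mem_sdiff.1 hb).2 this
    exact_mod_cast Finset.card_le_card this
  have harcB : ∀ B' ⊆ B, (B'.card : ℝ) * t ≤ (arcsBetween D (S₁ \ A) B' : ℝ) := by
    intro B' hB'
    rw [arcsBetween_eq_sum_in]
    push_cast
    calc (B'.card : ℝ) * t = ∑ _b ∈ B', t := by rw [Finset.sum_const, nsmul_eq_mul]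
    _ ≤ ∑ b ∈ B', (inDeg D b (S₁ \ A) : ℝ) := Finset.sum_le_sum (fun b hb => f3 b (hB' hb))
  have hSAleB : (S₁ \ A).card ≤ B.card := by
    rw [hSAcard, hBcard]; exact Nat.sub_le_sub_left (le_of_lt hviol) s
  have hinv : (1:ℝ) ≤ 1/p := by rw [le_div_iff₀ hp]; linarith
  have h11le : L ^ (1.1:ℝ) / p ≤ L^2 / (2*p) := by
    rw [div_le_div_iff₀ hp (by positivity)]
    nlinarith
  have hceil : ((⌈L ^ (1.1:ℝ) / p⌉₊ : ℕ) : ℝ) ≤ L^2 / (2*p) := by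
    have h1 : ((⌈L ^ (1.1:ℝ) / p⌉₊ : ℕ) : ℝ) < L ^ (1.1:ℝ) / p + 1 :=
      Nat.ceil_lt_add_one (by positivity)
    have h2 : L ^ (1.1:ℝ) / p + 1 ≤ L ^ (1.1:ℝ) / p + 1/p := by linarith
    have h3 : L ^ (1.1:ℝ) / p + 1/p = (L ^ (1.1:ℝ) + 1)/p := by ring
    have h4 : (L ^ (1.1:ℝ) + 1)/p ≤ (L^2/2)/p := by gcongr
    have h5 : (L^2/2)/p = L^2/(2*p) := by ring
    linarith
  have hceilpos : 0 < ⌈L ^ (1.1:ℝ) / p⌉₊ := Nat.ceil_pos.2 (by positivity)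
  by_cases hBsmall : (B.card : ℝ) ≤ L^2 / (2 * p)
  · -- Case I : B small, use P2 on (S₁ \ A) ∪ B
    refine p2_contra hP2 hE1 hBpos (harcB B (le_refl B)) ?_ ?_
    · calc ((S₁ \ A) ∪ B).card ≤ (S₁ \ A).card + B.card := Finset.card_union_le _ _
      _ ≤ 2 * B.card := by omega
    · calc (((S₁ \ A) ∪ B).card : ℝ) ≤ ((S₁ \ A).card : ℝ) + B.card := by
            exact_mod_cast Finset.card_union_le _ _
      _ ≤ 2 * (B.card : ℝ) := by
            have : ((S₁ \ A).card : ℝ) ≤ B.card := by exact_mod_cast hSAleB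
            linarith
      _ ≤ 2 * (L^2/(2*p)) := by linarith
      _ = L^2 / p := by rw [show (2:ℝ)*p = p*2 by ring, ← div_div]; ring
  push_neg at hBsmall
  by_cases hSAsmall : ((S₁ \ A).card : ℝ) < L ^ (1.1:ℝ) / p
  · -- Case II.x : S₁ \ A tiny, use P2 on (S₁ \ A) ∪ B' for small B' ⊆ B
    set m := ⌈L ^ (1.1:ℝ) / p⌉₊ with hmdef
    have hmB : m ≤ B.card := by
      have : (m:ℝ) ≤ (B.card:ℝ) := le_trans hceil (le_of_lt hBsmall)
      exact_mod_cast this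
    obtain ⟨B', hB'sub, hB'card⟩ := Finset.exists_subset_card_eq hmB
    have hSAm : (S₁ \ A).card ≤ m := by
      have : ((S₁ \ A).card : ℝ) ≤ (m:ℝ) := le_trans (le_of_lt hSAsmall) (Nat.le_ceil _)
      exact_mod_cast this
    have harc' : ((m:ℕ):ℝ) * t ≤ (arcsBetween D (S₁ \ A) B' : ℝ) := by
      rw [← hB'card]; exact harcB B' hB'sub
    refine p2_contra hP2 hE1 hceilpos harc' ?_ ?_
    · calc ((S₁ \ A) ∪ B').card ≤ (S₁ \ A).card + B'.card := Finset.card_union_le _ _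
      _ ≤ 2 * m := by omega
    · calc (((S₁ \ A) ∪ B').card : ℝ) ≤ ((S₁ \ A).card : ℝ) + B'.card := by
            exact_mod_cast Finset.card_union_le _ _
      _ ≤ 2 * (m : ℝ) := by
            have h1 : ((S₁ \ A).card : ℝ) ≤ (m:ℝ) := by exact_mod_cast hSAm
            have h2 : ((B'.card : ℕ):ℝ) = (m:ℝ) := by rw [hB'card]
            linarith
      _ ≤ 2 * (L^2/(2*p)) := by linarith
      _ = L^2 / p := by rw [show (2:ℝ)*p = p*2 by ring, ← div_div]; ring
  push_neg at hSAsmall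
  -- Case II.y : P3 on (S₁ \ A, B) gives |A| ≤ s/2
  have hdisjSB : Disjoint (S₁ \ A) B := hdisj.mono Finset.sdiff_subset hB2
  have hP3SB := hP3 (S₁ \ A) B hdisjSB hSAsmall (le_trans h11le (le_of_lt hBsmall))
  have hA2 : (A.card : ℝ) ≤ (s:ℝ)/2 := by
    have h0 := harcB B (le_refl B)
    have hBrpos : (0:ℝ) < B.card := by exact_mod_cast hBpos
    -- B.card * t ≤ (1+α/2) * (s - A.card) * B.card * p
    rw [hSAr] at hP3SB
    have hkey : t ≤ (1 + α/2) * ((s:ℝ) - A.card) * p := by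
      have h := le_trans h0 hP3SB
      have h' : t * (B.card:ℝ) ≤ ((1 + α/2) * ((s:ℝ) - A.card) * p) * (B.card:ℝ) := by
        calc t * (B.card:ℝ) = (B.card:ℝ) * t := by ring
        _ ≤ (1 + α/2) * ((s:ℝ) - A.card) * (B.card:ℝ) * p := h
        _ = ((1 + α/2) * ((s:ℝ) - A.card) * p) * (B.card:ℝ) := by ring
      exact le_of_mul_le_mul_right h' hBrpos
    have hpos2 : (0:ℝ) < (1 + α/2) * p := mul_pos (by linarith) hp
    have h2 : ((s:ℝ)/2) * ((1 + α/2)*p) ≤ ((s:ℝ) - A.card) * ((1 + α/2)*p) := by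
      calc ((s:ℝ)/2) * ((1 + α/2)*p) = (1/2 + α/4) * p * s := by ring
      _ = t := by rw [htdef]
      _ ≤ (1 + α/2) * ((s:ℝ) - A.card) * p := hkey
      _ = ((s:ℝ) - A.card) * ((1 + α/2)*p) := by ring
    have := le_of_mul_le_mul_right h2 hpos2
    linarith
  by_cases hAsmall : (A.card : ℝ) ≤ L^2 / (2*p)
  · -- Case II.a : A small, P2 on A ∪ NA
    refine p2_contra hP2 hE1 hApos (harcA A (le_refl A)) ?_ ?_
    · calc (A ∪ NA).card ≤ A.card + NA.card := Finset.card_union_le _ _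
      _ ≤ 2 * A.card := by omega
    · calc ((A ∪ NA).card : ℝ) ≤ (A.card : ℝ) + NA.card := by
            exact_mod_cast Finset.card_union_le _ _
      _ ≤ 2 * (A.card : ℝ) := by
            have : (NA.card : ℝ) ≤ A.card := by exact_mod_cast le_of_lt hviol
            linarith
      _ ≤ 2 * (L^2/(2*p)) := by linarith
      _ = L^2 / p := by rw [show (2:ℝ)*p = p*2 by ring, ← div_div]; ring
  push_neg at hAsmall
  have hAge : L ^ (1.1:ℝ) / p ≤ (A.card : ℝ) := le_trans h11le (le_of_lt hAsmall)
  by_cases hNAbig : L ^ (1.1:ℝ) / p ≤ (NA.card : ℝ)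
  · -- Case II.b.i : P3 on (A, NA) gives s/2 ≤ NA.card < A.card ≤ s/2
    have hdisjAN : Disjoint A NA := hdisj.mono hA hNA2
    have hP3AN := hP3 A NA hdisjAN hAge hNAbig
    have hApr : (0:ℝ) < A.card := by exact_mod_cast hApos
    have hkey : t ≤ (1 + α/2) * (NA.card : ℝ) * p := by
      have h := le_trans (harcA A (le_refl A)) hP3AN
      have h' : t * (A.card:ℝ) ≤ ((1 + α/2) * (NA.card : ℝ) * p) * (A.card:ℝ) := by
        calc t * (A.card:ℝ) = (A.card:ℝ) * t := by ring
        _ ≤ (1 + α/2) * (A.card:ℝ) * (NA.card:ℝ) * p := h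
        _ = ((1 + α/2) * (NA.card : ℝ) * p) * (A.card:ℝ) := by ring
      exact le_of_mul_le_mul_right h' hApr
    have hpos2 : (0:ℝ) < (1 + α/2) * p := mul_pos (by linarith) hp
    have hNAhalf : (s:ℝ)/2 ≤ NA.card := by
      have h2 : ((s:ℝ)/2) * ((1 + α/2)*p) ≤ (NA.card:ℝ) * ((1 + α/2)*p) := by
        calc ((s:ℝ)/2) * ((1 + α/2)*p) = (1/2 + α/4) * p * s := by ring
        _ = t := by rw [htdef]
        _ ≤ (1 + α/2) * (NA.card:ℝ) * p := hkey
        _ = (NA.card:ℝ) * ((1 + α/2)*p) := by ring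
      exact le_of_mul_le_mul_right h2 hpos2
    have : (NA.card : ℝ) < A.card := by exact_mod_cast hviol
    linarith
  push_neg at hNAbig
  -- Case II.b.ii : NA tiny, P2 on A' ∪ NA for small A' ⊆ A
  set m := ⌈L ^ (1.1:ℝ) / p⌉₊ with hmdef
  have hmA : m ≤ A.card := by
    have : (m:ℝ) ≤ (A.card:ℝ) := le_trans hceil (le_of_lt hAsmall)
    exact_mod_cast this
  obtain ⟨A', hA'sub, hA'card⟩ := Finset.exists_subset_card_eq hmA
  have hNAm : NA.card ≤ m := by
    have : (NA.card : ℝ) ≤ (m:ℝ) := le_trans (le_of_lt hNAbig) (Nat.le_ceil _)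
    exact_mod_cast this
  have harc' : ((m:ℕ):ℝ) * t ≤ (arcsBetween D A' NA : ℝ) := by
    rw [← hA'card]; exact harcA A' hA'sub
  refine p2_contra hP2 hE1 hceilpos harc' ?_ ?_
  · calc (A' ∪ NA).card ≤ A'.card + NA.card := Finset.card_union_le _ _
    _ ≤ 2 * m := by omega
  · calc ((A' ∪ NA).card : ℝ) ≤ (A'.card : ℝ) + NA.card := by
          exact_mod_cast Finset.card_union_le _ _
    _ ≤ 2 * (m : ℝ) := by
          have h1 : (NA.card : ℝ) ≤ (m:ℝ) := by exact_mod_cast hNAm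
          have h2 : ((A'.card : ℕ):ℝ) = (m:ℝ) := by rw [hA'card]
          linarith
    _ ≤ 2 * (L^2/(2*p)) := by linarith
    _ = L^2 / p := by rw [show (2:ℝ)*p = p*2 by ring, ← div_div]; ring

lemma matching_of_conditions {n : ℕ} {α p : ℝ} (hα : 0 < α) (hp : 0 < p) (hp1 : p < 1)
    {D : Fin n → Fin n → Bool}
    (hP2 : ∀ X : Finset (Fin n), (X.card : ℝ) ≤ (Real.log n)^2 / p →
      (arcsIn D X : ℝ) ≤ (X.card : ℝ) * (Real.log n) ^ (2.1 : ℝ))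
    (hP3 : ∀ X Y : Finset (Fin n), Disjoint X Y →
      (Real.log n) ^ (1.1 : ℝ) / p ≤ (X.card : ℝ) →
      (Real.log n) ^ (1.1 : ℝ) / p ≤ (Y.card : ℝ) →
      (arcsBetween D X Y : ℝ) ≤ (1 + α/2) * X.card * Y.card * p)
    {s : ℕ} {S₁ S₂ : Finset (Fin n)} (hdisj : Disjoint S₁ S₂)
    (hc1 : S₁.card = s) (hc2 : S₂.card = s)
    (hdeg : ∀ v : Fin n, (1/2 + α/4) * p * s ≤ (outDeg D v S₂ : ℝ) ∧
      (1/2 + α/4) * p * s ≤ (inDeg D v S₁ : ℝ))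
    (hE1 : 2 * (Real.log n) ^ (2.1 : ℝ) < (1/2 + α/4) * p * s)
    (hE2 : (Real.log n) ^ (1.1 : ℝ) + 1 ≤ (Real.log n)^2 / 2) :
    ∃ f : Fin n → Fin n, Set.BijOn f ↑S₁ ↑S₂ ∧ ∀ v ∈ S₁, D v (f v) = true := by
  classical
  set T : {x // x ∈ S₁} → Finset (Fin n) := fun a => S₂.filter (fun w => D a.1 w = true) with hT
  have hall : ∀ s' : Finset {x // x ∈ S₁}, s'.card ≤ (s'.biUnion T).card := by
    intro s'
    by_contra hlt
    push_neg at hlt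
    set A : Finset (Fin n) := s'.image Subtype.val with hAdef
    have hA : A ⊆ S₁ := by
      intro x hx
      obtain ⟨a, _, rfl⟩ := Finset.mem_image.1 hx
      exact a.2
    have hAcard : A.card = s'.card := Finset.card_image_of_injective _ Subtype.val_injective
    have hbu : s'.biUnion T = S₂.filter (fun w => ∃ a ∈ A, D a w = true) := by
      ext w
      simp only [Finset.mem_biUnion, hT, Finset.mem_filter, hAdef, Finset.mem_image]
      constructor
      · rintro ⟨a, ha, hw1, hw2⟩
        exact ⟨hw1, a.1, ⟨a, ha, rfl⟩, hw2⟩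
      · rintro ⟨hw, x, ⟨a, ha, rfl⟩, hx⟩
        exact ⟨a, ha, hw, hx⟩
    refine key hα hp hp1 hP2 hP3 hdisj hc1 hc2 hdeg hE1 hE2 A hA ?_
    rw [← hbu, hAcard]
    exact hlt
  obtain ⟨f₀, hf₀inj, hf₀mem⟩ := (Finset.all_card_le_biUnion_card_iff_exists_injective T).1 hall
  set f : Fin n → Fin n := fun v => if h : v ∈ S₁ then f₀ ⟨v, h⟩ else v with hfdef
  have hmem : ∀ v (h : v ∈ S₁), f v ∈ S₂ ∧ D v (f v) = true := by
    intro v h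
    have := hf₀mem ⟨v, h⟩
    rw [hT] at this
    simp only [Finset.mem_filter] at this
    simp only [hfdef, dif_pos h]
    exact this
  have hinj : Set.InjOn f ↑S₁ := by
    intro a ha b hb hab
    rw [Finset.mem_coe] at ha hb
    simp only [hfdef, dif_pos ha, dif_pos hb] at hab
    have := hf₀inj hab
    exact congrArg Subtype.val this
  have himg : S₁.image f = S₂ := by
    apply Finset.eq_of_subset_of_card_le
    · intro y hy
      obtain ⟨x, hx, rfl⟩ := Finset.mem_image.1 hy
      exact (hmem x hx).1
    · rw [Finset.card_image_of_injOn (by intro a ha b hb hab; exact hinj ha hb hab), hc1, hc2]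
  refine ⟨f, ⟨?_, hinj, ?_⟩, fun v hv => (hmem v hv).2⟩
  · intro v hv
    rw [Finset.mem_coe] at hv
    exact (hmem v hv).1
  · intro y hy
    rw [Finset.mem_coe, ← himg] at hy
    obtain ⟨x, hx, rfl⟩ := Finset.mem_image.1 hy
    exact ⟨x, hx, rfl⟩

/-- An `(n, α, p)`-pseudorandom digraph, as in Definition 3.1 of the paper. -/
def IsPseudorandom (n : ℕ) (α p : ℝ) (D : Fin n → Fin n → Bool) : Prop :=
  (∀ v : Fin n, (1/2 + 2*α) * n * p ≤ (outDeg D v Finset.univ : ℝ) ∧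
    (1/2 + 2*α) * n * p ≤ (inDeg D v Finset.univ : ℝ)) ∧
  (∀ X : Finset (Fin n), (X.card : ℝ) ≤ (Real.log n)^2 / p →
    (arcsIn D X : ℝ) ≤ (X.card : ℝ) * (Real.log n) ^ (2.1 : ℝ)) ∧
  (∀ X Y : Finset (Fin n), Disjoint X Y →
    (Real.log n) ^ (1.1 : ℝ) / p ≤ (X.card : ℝ) →
    (Real.log n) ^ (1.1 : ℝ) / p ≤ (Y.card : ℝ) →
    (arcsBetween D X Y : ℝ) ≤ (1 + α/2) * X.card * Y.card * p)

/-- Claim 3.4: in a pseudorandom digraph with `p = ω(log^8 n / n)`, disjoint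
equal-size sets `S₁, S₂` with `s p = ω(log^{2.1} n)` and good degrees between
them admit a perfect matching from `S₁` to `S₂`. -/
theorem stmt_13 (α : ℝ) (hα : 0 < α) (p : ℕ → ℝ) (hp : ∀ n, 0 < p n ∧ p n < 1)
    (hω : Tendsto (fun n : ℕ => p n * n / (Real.log n) ^ 8) atTop atTop)
    (D : (n : ℕ) → Fin n → Fin n → Bool)
    (hD : ∀ n, IsPseudorandom n α (p n) (D n))
    (s : ℕ → ℕ) (S₁ S₂ : (n : ℕ) → Finset (Fin n))
    (hdisj : ∀ n, Disjoint (S₁ n) (S₂ n))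
    (hcard : ∀ n, (S₁ n).card = s n ∧ (S₂ n).card = s n)
    (hsp : Tendsto (fun n : ℕ => (s n : ℝ) * p n / (Real.log n) ^ (2.1 : ℝ)) atTop atTop)
    (hdeg : ∀ n, ∀ v : Fin n,
      (1/2 + α/4) * p n * s n ≤ (outDeg (D n) v (S₂ n) : ℝ) ∧
      (1/2 + α/4) * p n * s n ≤ (inDeg (D n) v (S₁ n) : ℝ)) :
    ∀ᶠ n in atTop, ∃ f : Fin n → Fin n,
      Set.BijOn f ↑(S₁ n) ↑(S₂ n) ∧ ∀ v ∈ S₁ n, D n v (f v) = true := by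
  have hlog : Tendsto (fun n : ℕ => Real.log n) atTop atTop :=
    Real.tendsto_log_atTop.comp tendsto_natCast_atTop_atTop
  have h16 : ∀ᶠ n : ℕ in atTop, (16:ℝ) ≤ Real.log n := hlog.eventually_ge_atTop 16
  have h5 : ∀ᶠ n in atTop, (5:ℝ) ≤ (s n : ℝ) * p n / (Real.log n) ^ (2.1:ℝ) :=
    hsp.eventually_ge_atTop 5
  filter_upwards [h16, h5] with n hL16 hs5
  obtain ⟨hdc, hP2, hP3⟩ := hD n
  obtain ⟨hp0, hp1⟩ := hp n
  set L := Real.log n with hLdef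
  have hLpos : (0:ℝ) < L := by linarith
  have hL1 : (1:ℝ) ≤ L := by linarith
  have hL21pos : (0:ℝ) < L ^ (2.1:ℝ) := Real.rpow_pos_of_pos hLpos _
  have hsp' : 5 * L ^ (2.1:ℝ) ≤ (s n : ℝ) * p n := by
    rw [le_div_iff₀ hL21pos] at hs5; linarith
  have hE1 : 2 * L ^ (2.1:ℝ) < (1/2 + α/4) * p n * (s n : ℝ) := by
    have h1 : (1/2:ℝ) * ((s n : ℝ) * p n) ≤ (1/2 + α/4) * p n * (s n : ℝ) := by
      have hsn : (0:ℝ) ≤ (s n : ℝ) * p n := by positivity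
      nlinarith
    linarith
  have hE2 : L ^ (1.1:ℝ) + 1 ≤ L^2 / 2 := by
    have h2eq : L^2 = L ^ (1.1:ℝ) * L ^ (0.9:ℝ) := by
      calc L^2 = L ^ ((2:ℕ):ℝ) := (Real.rpow_natCast L 2).symm
      _ = L ^ ((1.1:ℝ) + (0.9:ℝ)) := by norm_num
      _ = L ^ (1.1:ℝ) * L ^ (0.9:ℝ) := Real.rpow_add hLpos _ _
    have h09 : (4:ℝ) ≤ L ^ (0.9:ℝ) := by
      have a1 : L ^ (0.5:ℝ) ≤ L ^ (0.9:ℝ) :=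
        Real.rpow_le_rpow_of_exponent_le hL1 (by norm_num)
      have a2 : (16:ℝ) ^ (0.5:ℝ) ≤ L ^ (0.5:ℝ) :=
        Real.rpow_le_rpow (by norm_num) hL16 (by norm_num)
      have a3 : (16:ℝ) ^ (0.5:ℝ) = 4 := by
        rw [show (16:ℝ) = 4^(2:ℕ) by norm_num, ← Real.rpow_natCast 4 2,
          ← Real.rpow_mul (by norm_num : (0:ℝ) ≤ 4)]
        norm_num
      linarith
    have h11ge1 : (1:ℝ) ≤ L ^ (1.1:ℝ) := by
      have := Real.rpow_le_rpow_of_exponent_le hL1 (show (0:ℝ) ≤ 1.1 by norm_num)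
      rwa [Real.rpow_zero] at this
    have h11pos : (0:ℝ) < L ^ (1.1:ℝ) := Real.rpow_pos_of_pos hLpos _
    rw [h2eq]
    nlinarith [mul_le_mul_of_nonneg_left h09 (le_of_lt h11pos)]
  exact matching_of_conditions hα hp0 hp1 hP2 hP3 (hdisj n) (hcard n).1 (hcard n).2
    (hdeg n) hE1 hE2
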